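/- For positive integers m, n with n ≤ m, the number of equivalence classes of compositions of m into n positive parts under cyclic shift equals (1/m) · Σ_{j | gcd(m,n)} φ(j) · C(m/j, n/j), where φ is Euler's totient function. -/

import Mathlib

/-- Cyclic shift of a tuple by `t` positions. -/
def cshift {n : ℕ} (t : ℕ) (f : Fin n → ℕ) : Fin n → ℕ :=
  fun i => f ⟨((i : ℕ) + t) % n, Nat.mod_lt _ i.pos⟩

namespace KR
variable {n : ℕ}

lemma cshift_cshift (a b : ℕ) (f : Fin n → ℕ) :
    cshift a (cshift b f) = cshift (a + b) f := by
  funext i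
  simp only [cshift]
  congr 1
  ext
  simp [Nat.mod_add_mod, Nat.add_assoc]

lemma cshift_mod (a : ℕ) (f : Fin n → ℕ) : cshift (a % n) f = cshift a f := by
  funext i
  simp only [cshift]
  congr 1
  apply Fin.ext
  show (i.1 + a % n) % n = (i.1 + a) % n
  rw [Nat.add_mod i.1 (a % n), Nat.mod_mod_of_dvd a dvd_rfl, ← Nat.add_mod]

lemma cshift_zero (f : Fin n → ℕ) : cshift 0 f = f := by
  funext i
  simp only [cshift, Nat.add_zero, Nat.mod_eq_of_lt i.isLt]

lemma cshift_of_dvd {s : ℕ} (h : n ∣ s) (f : Fin n → ℕ) : cshift s f = f := by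
  rw [← cshift_mod, Nat.mod_eq_zero_of_dvd h, cshift_zero]

lemma cshift_iterate (k : ℕ) (f : Fin n → ℕ) (h : cshift k f = f) (a : ℕ) :
    cshift (a * k) f = f := by
  induction a with
  | zero => simpa using cshift_zero f
  | succ a ih => rw [Nat.succ_mul, ← cshift_cshift, h, ih]

lemma fixed_gcd (hn : 0 < n) (k : ℕ) (f : Fin n → ℕ) (h : cshift k f = f) :
    cshift (Nat.gcd n k) f = f := by
  set b : ℤ := Nat.gcdB n k with hb
  set a : ℕ := (b % (n : ℤ)).toNat with ha
  have hn' : (n : ℤ) ≠ 0 := by exact_mod_cast hn.ne'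
  have h1 : (a : ℤ) = b % n := Int.toNat_of_nonneg (Int.emod_nonneg b hn')
  have hbez : (Nat.gcd n k : ℤ) = n * Nat.gcdA n k + k * b := Nat.gcd_eq_gcd_ab n k
  have key : ((a * k : ℕ) : ℤ) % n = ((Nat.gcd n k : ℕ) : ℤ) % n := by
    push_cast
    rw [Int.mul_emod, h1, Int.emod_emod_of_dvd _ dvd_rfl, ← Int.mul_emod]
    rw [hbez, mul_comm (k:ℤ) b, add_comm, Int.add_mul_emod_self_left]
  have keyn : (a * k) % n = (Nat.gcd n k) % n := by
    have := key
    rw [← Int.natCast_mod, ← Int.natCast_mod] at this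
    exact_mod_cast this
  rw [← cshift_mod, ← keyn, cshift_mod]
  exact cshift_iterate k f h a

lemma fixed_val {d : ℕ} (hd0 : 0 < d) (f : Fin n → ℕ) (h : cshift d f = f)
    (v : ℕ) (hv : v < n) : f ⟨v, hv⟩ = f ⟨v % d, Nat.lt_of_le_of_lt (Nat.mod_le v d) hv⟩ := by
  induction v using Nat.strong_induction_on with
  | _ v ih =>
    rcases Nat.lt_or_ge v d with hvd | hvd
    · congr 1
      exact Fin.ext (Nat.mod_eq_of_lt hvd).symm
    · have hvd' : v - d < n := by omega
      have hstep : f ⟨v, hv⟩ = f ⟨v - d, hvd'⟩ := by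
        have := congrFun h ⟨v - d, hvd'⟩
        simp only [cshift] at this
        rw [← this]
        congr 1
        apply Fin.ext
        show v = (v - d + d) % n
        rw [Nat.sub_add_cancel hvd, Nat.mod_eq_of_lt hv]
      rw [hstep, ih (v - d) (by omega) hvd']
      congr 1
      apply Fin.ext
      show (v - d) % d = v % d
      conv_rhs => rw [← Nat.sub_add_cancel hvd, Nat.add_mod_right]

lemma sum_period {d : ℕ} (hd0 : 0 < d) (hdn : d ∣ n) (h : Fin d → ℕ) :
    ∑ i : Fin n, h ⟨i.1 % d, Nat.mod_lt _ hd0⟩ = (n / d) * ∑ j : Fin d, h j := by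
  set g : ℕ → ℕ := fun x => h ⟨x % d, Nat.mod_lt _ hd0⟩ with hg
  have hL : ∑ i : Fin n, h ⟨i.1 % d, Nat.mod_lt _ hd0⟩ = ∑ i ∈ Finset.range n, g i :=
    Fin.sum_univ_eq_sum_range g n
  have hR : ∑ j : Fin d, h j = ∑ j ∈ Finset.range d, g j := by
    rw [← Fin.sum_univ_eq_sum_range g d]
    apply Finset.sum_congr rfl
    intro j _
    simp only [hg]
    congr 1
    exact Fin.ext (Nat.mod_eq_of_lt j.isLt).symm
  have hper : ∀ c : ℕ, ∑ i ∈ Finset.range (c * d), g i = c * ∑ j ∈ Finset.range d, g j := by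
    intro c
    induction c with
    | zero => simp
    | succ c ih =>
      rw [Nat.succ_mul, Finset.sum_range_add, ih, Nat.succ_mul]
      congr 1
      apply Finset.sum_congr rfl
      intro x _
      simp only [hg]
      congr 1
      apply Fin.ext
      show (c * d + x) % d = x % d
      rw [mul_comm]
      exact Nat.mul_add_mod d c x
  rw [hL, hR, ← hper, Nat.div_mul_cancel hdn]


/-- Compositions with period `d` correspond to compositions of length `d`. -/
def periodEquiv (m d : ℕ) (hn : 0 < n) (hd0 : 0 < d) (hdn : d ∣ n) :
    {h : Fin d → ℕ // (∀ j, 0 < h j) ∧ (n / d) * ∑ j, h j = m} ≃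
    {f : Fin n → ℕ // ((∀ i, 0 < f i) ∧ ∑ i, f i = m) ∧ cshift d f = f} where
  toFun h := ⟨fun i => h.1 ⟨i.1 % d, Nat.mod_lt _ hd0⟩, by
    refine ⟨⟨fun i => h.2.1 _, ?_⟩, ?_⟩
    · rw [sum_period hd0 hdn h.1, h.2.2]
    · funext i
      show h.1 ⟨(i.1 + d) % n % d, _⟩ = h.1 ⟨i.1 % d, _⟩
      exact congrArg h.1 (Fin.ext (by
        show (i.1 + d) % n % d = i.1 % d
        rw [Nat.mod_mod_of_dvd _ hdn, Nat.add_mod_right]))⟩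
  invFun f := ⟨fun j => f.1 ⟨j.1, Nat.lt_of_lt_of_le j.isLt (Nat.le_of_dvd hn hdn)⟩, by
    have hdle : d ≤ n := Nat.le_of_dvd hn hdn
    refine ⟨fun j => f.2.1.1 _, ?_⟩
    show (n / d) * ∑ j : Fin d, f.1 ⟨j.1, Nat.lt_of_lt_of_le j.isLt hdle⟩ = m
    have hsum := sum_period hd0 hdn
      (fun j : Fin d => f.1 ⟨j.1, Nat.lt_of_lt_of_le j.isLt hdle⟩)
    rw [← hsum]
    refine Eq.trans (Finset.sum_congr rfl fun i _ => ?_) f.2.1.2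
    exact (fixed_val hd0 f.1 f.2.2 i.1 i.isLt).symm⟩
  left_inv h := by
    apply Subtype.ext
    funext j
    exact congrArg h.1 (Fin.ext (Nat.mod_eq_of_lt j.isLt))
  right_inv f := by
    apply Subtype.ext
    funext i
    exact (fixed_val hd0 f.1 f.2.2 i.1 i.isLt).symm
lemma card_nonneg (d t : ℕ) :
    Nat.card {g : Fin d → ℕ // ∑ i, g i = t} = (d + t - 1).choose t := by
  rw [← Nat.card_congr (Sym.equivNatSumOfFintype (Fin d) t), Nat.card_eq_fintype_card,
    Sym.card_sym_eq_choose, Fintype.card_fin]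

/-- positive compositions equiv nonneg ones of smaller total -/
def posEquiv (d s : ℕ) (hds : d ≤ s) :
    {g : Fin d → ℕ // ∑ i, g i = s - d} ≃
      {f : Fin d → ℕ // (∀ i, 0 < f i) ∧ ∑ i, f i = s} where
  toFun g := ⟨fun i => g.1 i + 1, fun i => Nat.succ_pos _, by
    rw [Finset.sum_add_distrib, g.2]
    simp [Nat.sub_add_cancel hds]⟩
  invFun f := ⟨fun i => f.1 i - 1, by
    have h1 : ∀ i : Fin d, (f.1 i - 1) + 1 = f.1 i := fun i => Nat.succ_pred_eq_of_pos (f.2.1 i)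
    have : ∑ i, ((f.1 i - 1) + 1) = s := by
      simp only [h1]; exact f.2.2
    rw [Finset.sum_add_distrib] at this
    simp only [Finset.sum_const, Finset.card_univ, Fintype.card_fin, smul_eq_mul, mul_one] at this
    show ∑ i, (f.1 i - 1) = s - d
    omega⟩
  left_inv g := by ext i; simp
  right_inv f := by
    ext i
    exact Nat.succ_pred_eq_of_pos (f.2.1 i)

lemma card_pos_comp (d s : ℕ) (hd : 0 < d) (hds : d ≤ s) :
    Nat.card {f : Fin d → ℕ // (∀ i, 0 < f i) ∧ ∑ i, f i = s} = (s - 1).choose (d - 1) := by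
  rw [← Nat.card_congr (posEquiv d s hds), card_nonneg]
  have h1 : d + (s - d) - 1 = s - 1 := by omega
  rw [h1]
  have h2 : s - d = (s - 1) - (d - 1) := by omega
  rw [h2, Nat.choose_symm (by omega)]



/-! ### The action and Burnside -/

abbrev CompType (m n : ℕ) := {f : Fin n → ℕ // (∀ i, 0 < f i) ∧ ∑ i, f i = m}

lemma comp_lt (m : ℕ) (f : CompType m n) (i : Fin n) : f.1 i < m + 1 := by
  have h := Finset.single_le_sum (f := f.1)
    (fun j (_ : j ∈ Finset.univ) => Nat.zero_le (f.1 j)) (Finset.mem_univ i)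
  rw [f.2.2] at h
  omega

instance compFinite (m n : ℕ) : Finite (CompType m n) := by
  apply Finite.of_injective (fun f : CompType m n => fun i : Fin n =>
    (⟨f.1 i, comp_lt m f i⟩ : Fin (m+1)))
  intro f g h
  apply Subtype.ext
  funext i
  exact congrArg Fin.val (congrFun h i)

instance compAction (m n : ℕ) [NeZero n] : AddAction (ZMod n) (CompType m n) where
  vadd t f := ⟨cshift t.val f.1, fun i => f.2.1 _, by
    have hn : 0 < n := Nat.pos_of_ne_zero (NeZero.ne n)
    set c : Fin n := ⟨t.val % n, Nat.mod_lt _ hn⟩ with hc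
    rw [← cshift_mod]
    have h1 : ∀ i : Fin n, cshift (t.val % n) f.1 i = f.1 (i + c) := fun i =>
      congrArg f.1 (Fin.ext rfl)
    calc ∑ i, cshift (t.val % n) f.1 i = ∑ i, f.1 (i + c) :=
          Finset.sum_congr rfl fun i _ => h1 i
      _ = ∑ i, f.1 i := Equiv.sum_comp (Equiv.addRight c) f.1
      _ = m := f.2.2⟩
  zero_vadd f := Subtype.ext (by
    show cshift (0 : ZMod n).val f.1 = f.1
    rw [ZMod.val_zero, cshift_zero])
  add_vadd s t f := Subtype.ext (by
    show cshift (s + t).val f.1 = cshift s.val (cshift t.val f.1)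
    rw [cshift_cshift, ZMod.val_add, cshift_mod])

lemma vadd_def (m n : ℕ) [NeZero n] (t : ZMod n) (f : CompType m n) :
    (t +ᵥ f).1 = cshift t.val f.1 := rfl

lemma card_period (m d : ℕ) (hn : 0 < n) (hnm : n ≤ m) (hd0 : 0 < d) (hdn : d ∣ n) :
    Nat.card {f : Fin n → ℕ // ((∀ i, 0 < f i) ∧ ∑ i, f i = m) ∧ cshift d f = f}
      = if (n / d) ∣ m then (m / (n / d) - 1).choose (d - 1) else 0 := by
  rw [← Nat.card_congr (periodEquiv m d hn hd0 hdn)]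
  have hc0 : 0 < n / d := Nat.div_pos (Nat.le_of_dvd hn hdn) hd0
  by_cases hcm : (n / d) ∣ m
  · rw [if_pos hcm]
    obtain ⟨q, hq⟩ := hcm
    have hq' : m / (n / d) = q := by rw [hq, Nat.mul_div_cancel_left _ hc0]
    have e : {h : Fin d → ℕ // (∀ j, 0 < h j) ∧ (n / d) * ∑ j, h j = m}
        ≃ {h : Fin d → ℕ // (∀ j, 0 < h j) ∧ ∑ j, h j = q} :=
      Equiv.subtypeEquivRight (by
        intro h
        constructor
        · rintro ⟨h1, h2⟩
          exact ⟨h1, Nat.eq_of_mul_eq_mul_left hc0 (by rw [h2, hq])⟩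
        · rintro ⟨h1, h2⟩
          exact ⟨h1, by rw [h2, ← hq]⟩)
    have hdq : d ≤ q := by
      have h1 : n / (n / d) = d := Nat.div_div_self hdn hn.ne'
      have h2 : n / (n / d) ≤ m / (n / d) := Nat.div_le_div_right hnm
      omega
    rw [Nat.card_congr e, card_pos_comp d q hd0 hdq, hq']
  · rw [if_neg hcm]
    haveI : IsEmpty {h : Fin d → ℕ // (∀ j, 0 < h j) ∧ (n / d) * ∑ j, h j = m} :=
      ⟨fun h => hcm ⟨∑ j, h.1 j, h.2.2.symm⟩⟩
    exact Nat.card_of_isEmpty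

lemma card_fixedBy (m : ℕ) [NeZero n] (hn : 0 < n) (hnm : n ≤ m) (t : ZMod n) :
    Nat.card (AddAction.fixedBy (CompType m n) t) =
      (if (n / Nat.gcd n t.val) ∣ m
        then (m / (n / Nat.gcd n t.val) - 1).choose (Nat.gcd n t.val - 1) else 0) := by
  set d := Nat.gcd n t.val with hd
  have hd0 : 0 < d := Nat.gcd_pos_of_pos_left _ hn
  have hdn : d ∣ n := Nat.gcd_dvd_left n t.val
  have e1 : AddAction.fixedBy (CompType m n) t ≃
      {f : CompType m n // cshift d f.1 = f.1} := by
    apply Equiv.subtypeEquivRight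
    intro f
    show t +ᵥ f = f ↔ _
    rw [Subtype.ext_iff, vadd_def]
    constructor
    · intro h; exact fixed_gcd hn t.val f.1 h
    · intro h
      have := cshift_iterate d f.1 h (t.val / d)
      rwa [Nat.div_mul_cancel (Nat.gcd_dvd_right n t.val)] at this
  have e2 : {f : CompType m n // cshift d f.1 = f.1} ≃
      {f : Fin n → ℕ // ((∀ i, 0 < f i) ∧ ∑ i, f i = m) ∧ cshift d f = f} :=
    Equiv.subtypeSubtypeEquivSubtypeInter
      (fun f : Fin n → ℕ => (∀ i, 0 < f i) ∧ ∑ i, f i = m) (fun f => cshift d f = f)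
  rw [Nat.card_congr (e1.trans e2)]
  exact card_period m d hn hnm hd0 hdn


lemma zmod_sum [NeZero n] (g : ℕ → ℕ) :
    ∑ t : ZMod n, g t.val = ∑ k ∈ Finset.range n, g k := by
  refine Finset.sum_nbij' (fun t => t.val) (fun k => (k : ZMod n)) ?_ ?_ ?_ ?_ ?_
  · intro t _
    exact Finset.mem_range.mpr (ZMod.val_lt t)
  · intro k _
    exact Finset.mem_univ _
  · intro t _
    exact ZMod.natCast_rightInverse t
  · intro k hk
    exact ZMod.val_cast_of_lt (Finset.mem_range.mp hk)
  · intro t _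
    rfl

lemma burnside_step (m : ℕ) [NeZero n] (hn : 0 < n) (hnm : n ≤ m) :
    Nat.card (Quotient (AddAction.orbitRel (ZMod n) (CompType m n))) * n
      = ∑ k ∈ Finset.range n, (if (n / Nat.gcd n k) ∣ m
          then (m / (n / Nat.gcd n k) - 1).choose (Nat.gcd n k - 1) else 0) := by
  haveI : Fintype (CompType m n) := Fintype.ofFinite _
  haveI : ∀ t : ZMod n, Fintype (AddAction.fixedBy (CompType m n) t) :=
    fun t => Fintype.ofFinite _
  haveI : Fintype (Quotient (AddAction.orbitRel (ZMod n) (CompType m n))) := Fintype.ofFinite _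
  have hb := AddAction.sum_card_fixedBy_eq_card_orbits_mul_card_addGroup (ZMod n) (CompType m n)
  rw [ZMod.card n] at hb
  rw [Nat.card_eq_fintype_card, ← hb]
  have hcong : ∑ t : ZMod n, Fintype.card (AddAction.fixedBy (CompType m n) t)
      = ∑ t : ZMod n, (fun k => if (n / Nat.gcd n k) ∣ m
          then (m / (n / Nat.gcd n k) - 1).choose (Nat.gcd n k - 1) else 0) (ZMod.val t) :=
    Finset.sum_congr rfl (fun t _ => by
      rw [← Nat.card_eq_fintype_card, card_fixedBy m hn hnm t])
  rw [hcong]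
  exact zmod_sum (n := n) (fun k => if (n / Nat.gcd n k) ∣ m
    then (m / (n / Nat.gcd n k) - 1).choose (Nat.gcd n k - 1) else 0)

lemma sum_gcd (hn : 0 < n) (F : ℕ → ℕ) :
    ∑ k ∈ Finset.range n, F (Nat.gcd n k) = ∑ d ∈ n.divisors, (n / d).totient * F d := by
  rw [← Finset.sum_fiberwise_of_maps_to (g := fun k => Nat.gcd n k) (t := n.divisors)
    (fun x _ => Nat.mem_divisors.mpr ⟨Nat.gcd_dvd_left _ _, hn.ne'⟩) (fun k => F (Nat.gcd n k))]
  apply Finset.sum_congr rfl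
  intro d hd
  have hcong : ∑ k ∈ Finset.filter (fun k => Nat.gcd n k = d) (Finset.range n), F (Nat.gcd n k)
      = ∑ _k ∈ Finset.filter (fun k => Nat.gcd n k = d) (Finset.range n), F d :=
    Finset.sum_congr rfl (fun k hk => by rw [(Finset.mem_filter.mp hk).2])
  rw [hcong, Finset.sum_const, smul_eq_mul]
  congr 1
  exact (Nat.totient_div_of_dvd (Nat.dvd_of_mem_divisors hd)).symm

lemma reindex (hn : 0 < n) (F : ℕ → ℕ) :
    ∑ d ∈ n.divisors, (n / d).totient * F d = ∑ j ∈ n.divisors, j.totient * F (n / j) := by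
  rw [← Nat.sum_div_divisors n (fun j => j.totient * F (n / j))]
  apply Finset.sum_congr rfl
  intro d hd
  rw [Nat.div_div_self (Nat.dvd_of_mem_divisors hd) hn.ne']

end KR

theorem knopfmacher_robbins (m n : ℕ) (hn : 0 < n) (hnm : n ≤ m) :
    (Nat.card (Quot (fun f g : {f : Fin n → ℕ // (∀ i, 0 < f i) ∧ ∑ i, f i = m} =>
        ∃ t, g.val = cshift t f.val)) : ℚ) =
      (1 / m) * ∑ j ∈ (m.gcd n).divisors,
        (j.totient : ℚ) * ((m / j).choose (n / j) : ℚ) := by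
  haveI : NeZero n := ⟨hn.ne'⟩
  have hm : 0 < m := hn.trans_le hnm
  have hiff : ∀ a b : KR.CompType m n,
      (∃ t, b.val = cshift t a.val) ↔ (AddAction.orbitRel (ZMod n) (KR.CompType m n)).r a b := by
    intro a b
    constructor
    · rintro ⟨t, hb⟩
      refine AddAction.mem_orbit_iff.mpr ⟨((n - t % n : ℕ) : ZMod n), ?_⟩
      apply Subtype.ext
      show cshift (((n - t % n : ℕ) : ZMod n)).val b.1 = a.1
      rw [ZMod.val_natCast, KR.cshift_mod, hb, KR.cshift_cshift]
      apply KR.cshift_of_dvd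
      have h1 := Nat.div_add_mod t n
      have h2 := Nat.mod_lt t hn
      have h3 : n - t % n + t = n * (1 + t / n) := by
        have h4 : n * (1 + t / n) = n + n * (t / n) := by ring
        omega
      exact ⟨1 + t / n, h3⟩
    · intro hb
      obtain ⟨s, hs⟩ := AddAction.mem_orbit_iff.mp hb
      refine ⟨n - s.val, ?_⟩
      have hs1 : a.1 = cshift s.val b.1 := congrArg Subtype.val hs.symm
      rw [hs1, KR.cshift_cshift]
      have hval : s.val < n := ZMod.val_lt s
      rw [show n - s.val + s.val = n by omega]
      exact (KR.cshift_of_dvd dvd_rfl b.1).symm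
  have hquot : Nat.card (Quot (fun f g : KR.CompType m n => ∃ t, g.val = cshift t f.val))
      = Nat.card (Quotient (AddAction.orbitRel (ZMod n) (KR.CompType m n))) :=
    Nat.card_congr (Quot.congrRight hiff)
  set N := Nat.card (Quotient (AddAction.orbitRel (ZMod n) (KR.CompType m n))) with hN
  set T := ∑ j ∈ (m.gcd n).divisors, j.totient * ((m / j - 1).choose (n / j - 1)) with hT
  set U := ∑ j ∈ (m.gcd n).divisors, j.totient * ((m / j).choose (n / j)) with hU
  have key1 : N * n = T := by
    rw [hN, KR.burnside_step m hn hnm, KR.sum_gcd hn (fun d => if n / d ∣ m then (m / (n / d) - 1).choose (d - 1) else 0),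
      KR.reindex hn (fun d => if n / d ∣ m then (m / (n / d) - 1).choose (d - 1) else 0)]
    have step : ∀ j ∈ n.divisors,
        j.totient * (if (n / (n / j)) ∣ m
          then (m / (n / (n / j)) - 1).choose ((n / j) - 1) else 0)
        = j.totient * (if j ∣ m then (m / j - 1).choose (n / j - 1) else 0) := fun j hj => by
      rw [Nat.div_div_self (Nat.dvd_of_mem_divisors hj) hn.ne']
    rw [Finset.sum_congr rfl step]
    have hset : (m.gcd n).divisors = n.divisors.filter (fun j => j ∣ m) := by
      ext j
      simp only [Nat.mem_divisors, Finset.mem_filter]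
      constructor
      · rintro ⟨h1, -⟩
        obtain ⟨hm', hn'⟩ := (Nat.dvd_gcd_iff).mp h1
        exact ⟨⟨hn', hn.ne'⟩, hm'⟩
      · rintro ⟨⟨h1, -⟩, h2⟩
        exact ⟨Nat.dvd_gcd h2 h1, (Nat.gcd_pos_of_pos_right m hn).ne'⟩
    rw [hT, hset, Finset.sum_filter]
    apply Finset.sum_congr rfl
    intro j _
    rw [mul_ite, mul_zero]
  have key2 : m * T = n * U := by
    rw [hT, hU, Finset.mul_sum, Finset.mul_sum]
    apply Finset.sum_congr rfl
    intro j hj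
    have hjg : j ∣ m.gcd n := Nat.dvd_of_mem_divisors hj
    have hj0 : 0 < j := Nat.pos_of_mem_divisors hj
    obtain ⟨a, ha⟩ := hjg.trans (Nat.gcd_dvd_left m n)
    obtain ⟨b, hb⟩ := hjg.trans (Nat.gcd_dvd_right m n)
    have ha' : m / j = a := by rw [ha, Nat.mul_div_cancel_left _ hj0]
    have hb' : n / j = b := by rw [hb, Nat.mul_div_cancel_left _ hj0]
    have ha1 : 0 < a := by
      rcases a.eq_zero_or_pos with rfl | h
      · rw [mul_zero] at ha; omega
      · exact h
    have hb1 : 0 < b := by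
      rcases b.eq_zero_or_pos with rfl | h
      · rw [mul_zero] at hb; omega
      · exact h
    have hch : (a - 1).succ * (a - 1).choose (b - 1) = (a - 1).succ.choose (b - 1).succ * (b - 1).succ :=
      Nat.add_one_mul_choose_eq (a - 1) (b - 1)
    have e1 : (a - 1).succ = a := Nat.succ_pred_eq_of_pos ha1
    have e2 : (b - 1).succ = b := Nat.succ_pred_eq_of_pos hb1
    rw [e1, e2] at hch
    rw [ha', hb', ha, hb]
    calc j * a * (j.totient * (a - 1).choose (b - 1))
        = j * j.totient * (a * (a - 1).choose (b - 1)) := by ring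
      _ = j * j.totient * (a.choose b * b) := by rw [hch]
      _ = j * b * (j.totient * a.choose b) := by ring
  have hm' : (m : ℚ) ≠ 0 := Nat.cast_ne_zero.mpr hm.ne'
  have hn' : (n : ℚ) ≠ 0 := Nat.cast_ne_zero.mpr hn.ne'
  have hUq : ∑ j ∈ (m.gcd n).divisors, (j.totient : ℚ) * ((m / j).choose (n / j) : ℚ)
      = (U : ℚ) := by
    rw [hU]
    push_cast
    rfl
  rw [hquot, hUq]
  have hA : (N : ℚ) * n = T := by exact_mod_cast key1
  have hB : (m : ℚ) * T = n * U := by exact_mod_cast key2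
  have hfin : (N : ℚ) * m * n = U * n := by linear_combination (m : ℚ) * hA + hB
  have := mul_right_cancel₀ hn' hfin
  rw [one_div, inv_mul_eq_div, eq_div_iff hm']
  linarith [this]
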